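/- Let T ⊂ ℝ² be a triangle in standard position (d = 2) satisfying Condition 1. Then (1/2)·H_{T₀} < H_T < 2·H_{T₀}, where H_T := (α₁α₂/|T|)·h_T and H_{T₀} := (h_T²/|T|)·min_i |L_i| is computed from the edge lengths L_i, the diameter h_T, and the area |T| of T. -/

import Mathlib

open MeasureTheory ENNReal

noncomputable section

abbrev Euc (d : ℕ) : Type := EuclideanSpace ℝ (Fin d)

def vec2 (a b : ℝ) : Euc 2 := (WithLp.equiv 2 (Fin 2 → ℝ)).symm ![a, b]

set_option maxHeartbeats 1000000 in
/-- for a triangle `T` in standard position (vertices `x₁ = (0,0)`,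
`x₂ = (α₁,0)`, `x₃ = (α₂ s, α₂ t)` with `s² + t² = 1`, `t > 0`, `α₁, α₂ > 0`)
satisfying Condition 1 (the edge `x₂x₃` is the longest edge, so `h_T = |x₂ − x₃|`,
and `α₂ ≤ α₁`), one has `(1/2)·H_{T₀} < H_T < 2·H_{T₀}`, where
`H_T = (α₁α₂/|T|)·h_T` and `H_{T₀} = (h_T²/|T|)·min_i |L_i|`. -/
theorem stmt_2 (α₁ α₂ s t : ℝ) (hα₁ : 0 < α₁) (hα₂ : 0 < α₂)
    (hst : s ^ 2 + t ^ 2 = 1) (ht : 0 < t) :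
    ∀ x₁ x₂ x₃ : Euc 2, x₁ = 0 → x₂ = vec2 α₁ 0 → x₃ = vec2 (α₂ * s) (α₂ * t) →
    -- Condition 1: `x₂x₃` is the longest edge and `α₂ ≤ α₁`
    dist x₁ x₂ ≤ dist x₂ x₃ → dist x₁ x₃ ≤ dist x₂ x₃ → α₂ ≤ α₁ →
    ∀ T : Set (Euc 2), T = convexHull ℝ {x₁, x₂, x₃} →
    ∀ hT HT HT₀ : ℝ,
      hT = dist x₂ x₃ →
      HT = α₁ * α₂ / (volume T).toReal * hT →
      HT₀ = hT ^ 2 / (volume T).toReal * min (dist x₁ x₂) (min (dist x₁ x₃) (dist x₂ x₃)) →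
      (1 / 2) * HT₀ < HT ∧ HT < 2 * HT₀ := by
  intro x₁ x₂ x₃ h1 h2 h3 hle1 hle2 hα21 T hTdef hT HT HT₀ hhT hHT hHT₀
  -- distances
  have d12 : dist x₁ x₂ = α₁ := by
    rw [h1, h2, EuclideanSpace.dist_eq]
    simp only [Fin.sum_univ_two, vec2, WithLp.equiv_symm_apply, PiLp.toLp_apply, Matrix.cons_val_zero,
      Matrix.cons_val_one, Matrix.head_cons, PiLp.zero_apply, Real.dist_eq]
    rw [show |(0:ℝ) - α₁| ^ 2 + |(0:ℝ) - 0| ^ 2 = α₁ ^ 2 by simp only [sq_abs]; ring,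
      Real.sqrt_sq hα₁.le]
  have d13 : dist x₁ x₃ = α₂ := by
    rw [h1, h3, EuclideanSpace.dist_eq]
    simp only [Fin.sum_univ_two, vec2, WithLp.equiv_symm_apply, PiLp.toLp_apply, Matrix.cons_val_zero,
      Matrix.cons_val_one, Matrix.head_cons, PiLp.zero_apply, Real.dist_eq]
    rw [show |(0:ℝ) - α₂ * s| ^ 2 + |(0:ℝ) - α₂ * t| ^ 2 = α₂ ^ 2 * (s ^ 2 + t ^ 2) by
        simp only [sq_abs]; ring,
      hst, mul_one, Real.sqrt_sq hα₂.le]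
  -- h_T squared
  have hα₁hT' : α₁ ≤ hT := by rw [hhT, ← d12]; exact hle1
  have hTpos : 0 < hT := lt_of_lt_of_le hα₁ hα₁hT'
  have h2T : hT ^ 2 = α₁ ^ 2 - 2 * α₁ * α₂ * s + α₂ ^ 2 := by
    have e : hT ^ 2 = |α₁ - α₂ * s| ^ 2 + |(0:ℝ) - α₂ * t| ^ 2 := by
      rw [hhT, h2, h3, EuclideanSpace.dist_eq, Real.sq_sqrt (by positivity)]
      simp only [Fin.sum_univ_two, vec2, WithLp.equiv_symm_apply, PiLp.toLp_apply, Matrix.cons_val_zero,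
        Matrix.cons_val_one, Matrix.head_cons, Real.dist_eq]
    rw [e]; simp only [sq_abs]; nlinarith [hst]
  have hs1 : -1 < s := by nlinarith
  -- volume positive and finite
  have hmin : min (dist x₁ x₂) (min (dist x₁ x₃) (dist x₂ x₃)) = α₂ := by
    rw [min_eq_left hle2, d12, d13, min_eq_right hα21]
  rw [hmin] at hHT₀
  have hvp : 0 < (volume T).toReal := by
    have hspan : affineSpan ℝ ({x₁, x₂, x₃} : Set (Euc 2)) = ⊤ := by
      rw [AffineSubspace.affineSpan_eq_top_iff_vectorSpan_eq_top_of_nonempty ℝ (Euc 2) (Euc 2)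
        ⟨x₁, by simp⟩]
      have hm2 : x₂ ∈ vectorSpan ℝ ({x₁, x₂, x₃} : Set (Euc 2)) := by
        have := vsub_mem_vectorSpan ℝ (show x₂ ∈ ({x₁, x₂, x₃} : Set (Euc 2)) by simp)
          (show x₁ ∈ ({x₁, x₂, x₃} : Set (Euc 2)) by simp)
        simpa [h1] using this
      have hm3 : x₃ ∈ vectorSpan ℝ ({x₁, x₂, x₃} : Set (Euc 2)) := by
        have := vsub_mem_vectorSpan ℝ (show x₃ ∈ ({x₁, x₂, x₃} : Set (Euc 2)) by simp)
          (show x₁ ∈ ({x₁, x₂, x₃} : Set (Euc 2)) by simp)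
        simpa [h1] using this
      rw [Submodule.eq_top_iff']
      intro y
      have hα₂t : α₂ * t ≠ 0 := by positivity
      have hy : y = ((y 0 - (y 1 / (α₂ * t)) * (α₂ * s)) / α₁) • x₂
          + (y 1 / (α₂ * t)) • x₃ := by
        rw [h2, h3]
        ext i
        fin_cases i <;> simp [vec2] <;> field_simp <;> ring
      rw [hy]
      exact Submodule.add_mem _ (Submodule.smul_mem _ _ hm2) (Submodule.smul_mem _ _ hm3)
    have hint : (interior T).Nonempty := by
      rw [hTdef, interior_convexHull_nonempty_iff_affineSpan_eq_top]
      exact hspan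
    have hpos : 0 < volume T :=
      lt_of_lt_of_le (isOpen_interior.measure_pos volume hint) (measure_mono interior_subset)
    have hfin : volume T < ⊤ := by
      rw [hTdef]
      exact ((Set.toFinite ({x₁, x₂, x₃} : Set (Euc 2))).isCompact_convexHull ℝ).measure_lt_top
    exact ENNReal.toReal_pos hpos.ne' hfin.ne
  obtain ⟨v, hv, hvolpos⟩ : ∃ v : ℝ, (volume T).toReal = v ∧ 0 < v :=
    ⟨(volume T).toReal, rfl, hvp⟩
  rw [hv] at hHT hHT₀
  clear hTdef hhT hle1 hle2 h1 h2 h3 hv hvp hmin d12 d13 T x₁ x₂ x₃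
  -- key inequalities
  have hT2α₁ : hT < 2 * α₁ := by
    have h4 : hT ^ 2 < (2 * α₁) ^ 2 := by
      nlinarith [mul_lt_mul_of_pos_left hs1 (mul_pos hα₁ hα₂), sq_nonneg (α₁ - α₂),
        mul_nonneg (sub_nonneg.2 hα21) hα₁.le]
    exact lt_of_pow_lt_pow_left₀ 2 (by positivity) h4
  have hα₁hT : α₁ < 2 * hT := by linarith
  have hkey := mul_pos hTpos hα₂
  have core1 : 1/2 * (hT^2 * α₂) < α₁ * α₂ * hT := by
    nlinarith [mul_lt_mul_of_pos_right hT2α₁ hkey]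
  have core2 : α₁ * α₂ * hT < 2 * (hT^2 * α₂) := by
    nlinarith [mul_lt_mul_of_pos_right hα₁hT hkey]
  constructor
  · rw [hHT, hHT₀, show (1:ℝ)/2 * (hT ^ 2 / v * α₂) = 1/2 * (hT^2 * α₂) / v by ring,
      show α₁ * α₂ / v * hT = α₁ * α₂ * hT / v by ring,
      div_lt_div_iff₀ hvolpos hvolpos]
    exact mul_lt_mul_of_pos_right core1 hvolpos
  · rw [hHT, hHT₀, show (2:ℝ) * (hT ^ 2 / v * α₂) = 2 * (hT^2 * α₂) / v by ring,
      show α₁ * α₂ / v * hT = α₁ * α₂ * hT / v by ring,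
      div_lt_div_iff₀ hvolpos hvolpos]
    exact mul_lt_mul_of_pos_right core2 hvolpos
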